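/- Let p be a prime, l ≥ 2 an integer, and R ⊆ F_p* a multiplicative subgroup with |R| > p^{(l+1)/(2l)}. Then every element of F_p* is a sum of l elements of R; that is, F_p* ⊆ lR. -/

import Mathlib

set_option maxHeartbeats 1000000

open Finset Pointwise

/-- `R` is (the image in `F_p` of) a multiplicative subgroup of `F_p^*`. -/
def IsMulSubgroup (p : ℕ) (R : Finset (ZMod p)) : Prop :=
  ∃ H : Subgroup (ZMod p)ˣ, (R : Set (ZMod p)) = Units.val '' (H : Set (ZMod p)ˣ)

open Complex in
private lemma parseval_aux {p : ℕ} [NeZero p] (c : ZMod p → ℝ) :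
    ∑ t : ZMod p, ‖∑ y : ZMod p, (c y : ℂ) * ZMod.stdAddChar (t * y)‖ ^ 2
      = p * ∑ y : ZMod p, c y ^ 2 := by
  set ψ : AddChar (ZMod p) ℂ := ZMod.stdAddChar with hψ
  have horth : ∀ t : ZMod p, ∑ y : ZMod p, ψ (t * y) = if t = 0 then (p : ℂ) else 0 := by
    intro t
    split_ifs with h
    · simp only [h, zero_mul, AddChar.map_zero_eq_one, sum_const, card_univ]
      simp [ZMod.card]
    · simpa [AddChar.mulShift_apply] using
        AddChar.sum_eq_zero_of_ne_one (ZMod.isPrimitive_stdAddChar p h)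
  have hconj : ∀ z : ZMod p, (starRingEnd ℂ) (ψ z) = ψ (-z) := by
    intro z
    rw [AddChar.map_neg_eq_inv, ← Complex.inv_eq_conj]
    rw [hψ, ZMod.stdAddChar_apply]
    exact Circle.norm_coe _
  have hC : ∑ t : ZMod p, (∑ y : ZMod p, (c y : ℂ) * ψ (t * y)) *
      (starRingEnd ℂ) (∑ y : ZMod p, (c y : ℂ) * ψ (t * y)) = (p : ℂ) * ∑ y : ZMod p, (c y : ℂ)^2 := by
    have expand : ∀ t : ZMod p, (∑ y : ZMod p, (c y : ℂ) * ψ (t * y)) *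
        (starRingEnd ℂ) (∑ y : ZMod p, (c y : ℂ) * ψ (t * y)) =
        ∑ y : ZMod p, ∑ z : ZMod p, (c y : ℂ) * (c z : ℂ) * ψ (t * (y - z)) := by
      intro t
      rw [map_sum, Finset.sum_mul_sum]
      refine Finset.sum_congr rfl fun y _ => Finset.sum_congr rfl fun z _ => ?_
      rw [map_mul (starRingEnd ℂ), Complex.conj_ofReal, hconj]
      rw [mul_mul_mul_comm, ← AddChar.map_add_eq_mul]
      ring_nf
    simp only [expand]
    rw [Finset.sum_comm]
    have key : ∀ y : ZMod p, ∑ t : ZMod p, ∑ z : ZMod p, (c y : ℂ) * (c z : ℂ) * ψ (t * (y - z))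
        = (p : ℂ) * (c y : ℂ)^2 := by
      intro y
      rw [Finset.sum_comm]
      have inner : ∀ z : ZMod p, ∑ t : ZMod p, (c y : ℂ) * (c z : ℂ) * ψ (t * (y - z))
          = (c y : ℂ) * (c z : ℂ) * (if y - z = 0 then (p:ℂ) else 0) := by
        intro z
        rw [← Finset.mul_sum]
        congr 1
        calc ∑ t : ZMod p, ψ (t * (y - z)) = ∑ t : ZMod p, ψ ((y - z) * t) := by
              refine Finset.sum_congr rfl fun t _ => by rw [mul_comm]
        _ = _ := horth (y - z)
      simp only [inner, sub_eq_zero, mul_ite, mul_zero]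
      rw [Finset.sum_ite_eq univ y (fun z => (c y : ℂ) * (c z : ℂ) * p)]
      simp [sq]; ring
    simp only [key]
    rw [← Finset.mul_sum]
  have hreal : ((∑ t : ZMod p, ‖∑ y : ZMod p, (c y : ℂ) * ψ (t * y)‖ ^ 2 : ℝ) : ℂ)
      = ((p * ∑ y : ZMod p, c y ^ 2 : ℝ) : ℂ) := by
    push_cast
    rw [← hC]
    refine Finset.sum_congr rfl fun t _ => ?_
    rw [Complex.mul_conj']
  exact_mod_cast hreal


open Complex in
private theorem main_aux (p : ℕ) (hp : p.Prime) (l : ℕ) (hl : 2 ≤ l)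
    (R : Finset (ZMod p))
    (hone : (1 : ZMod p) ∈ R) (hmul : ∀ a ∈ R, ∀ b ∈ R, a * b ∈ R)
    (hinv : ∀ a ∈ R, ∃ b ∈ R, a * b = 1) (h0R : (0 : ZMod p) ∉ R)
    (hcard : (p : ℝ) ^ (((l : ℝ) + 1) / (2 * (l : ℝ))) < (R.card : ℝ))
    (x : ZMod p) (hx : x ≠ 0)
    (hcon : ∀ r : Fin l → ZMod p, (∀ i, r i ∈ R) → ∑ i, r i ≠ x) : False := by
  haveI : Fact p.Prime := ⟨hp⟩
  set A := R.card with hA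
  set ψ : AddChar (ZMod p) ℂ := ZMod.stdAddChar with hψ
  set S : ZMod p → ℂ := fun t => ∑ r ∈ R, ψ (t * r) with hS
  set T : Finset (Fin l → ZMod p) := Fintype.piFinset fun _ => R with hT
  set Nc : ZMod p → ℕ := fun y => (T.filter fun r => ∑ i, r i = y).card with hNc
  have hA1 : 1 ≤ A := Finset.card_pos.2 ⟨1, hone⟩
  have hAp : A ≤ p := by
    calc A ≤ Fintype.card (ZMod p) := Finset.card_le_univ R
    _ = p := ZMod.card p
  -- S is R-invariant
  have hSmul : ∀ u ∈ R, ∀ t : ZMod p, S (u * t) = S t := by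
    intro u hu t
    obtain ⟨w, hw, hw1⟩ := hinv u hu
    refine Finset.sum_nbij' (fun r => u * r) (fun r => w * r) ?_ ?_ ?_ ?_ ?_
    · intro r hr; exact hmul u hu r hr
    · intro r hr; exact hmul w hw r hr
    · intro r _; show w * (u * r) = r
      rw [← mul_assoc, mul_comm w u, hw1, one_mul]
    · intro r _; show u * (w * r) = r
      rw [← mul_assoc, hw1, one_mul]
    · intro r _; show ψ (u * t * r) = ψ (t * (u * r))
      congr 1; ring
  -- N vanishes on the coset x*R
  have hNker : ∀ u ∈ R, Nc (u * x) = 0 := by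
    intro u hu
    rw [hNc]
    rw [Finset.card_eq_zero, Finset.filter_eq_empty_iff]
    intro r hrT hsum
    obtain ⟨w, hw, hw1⟩ := hinv u hu
    refine hcon (fun i => w * r i) (fun i => hmul w hw _ ?_) ?_
    · exact Fintype.mem_piFinset.1 hrT i
    · rw [← Finset.mul_sum, hsum, ← mul_assoc, mul_comm w u, hw1, one_mul]
  -- total count
  have hNsum : ∑ y : ZMod p, Nc y = A ^ l := by
    have h1 := Finset.card_eq_sum_card_fiberwise
      (s := T) (t := univ) (f := fun r => ∑ i, r i) (fun r _ => mem_univ _)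
    have h2 : T.card = A ^ l := by
      rw [hT, Fintype.card_piFinset]
      simp
      rfl
    rw [← h2, h1]
  -- character sum of a sum
  have hpsum : ∀ (s : Finset (Fin l)) (f : Fin l → ZMod p),
      ψ (∑ i ∈ s, f i) = ∏ i ∈ s, ψ (f i) := by
    intro s f
    induction s using Finset.cons_induction with
    | empty => simp
    | cons a s ha ih => rw [Finset.sum_cons, Finset.prod_cons, AddChar.map_add_eq_mul, ih]
  -- Fourier expansion of N
  have hFour : ∀ t : ZMod p, (S t) ^ l = ∑ y : ZMod p, (Nc y : ℂ) * ψ (t * y) := by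
    intro t
    have h1 : (S t) ^ l = ∏ _i : Fin l, S t := by
      rw [Finset.prod_const, Finset.card_univ, Fintype.card_fin]
    rw [h1, hS]
    rw [Finset.prod_univ_sum]
    calc ∑ r ∈ T, ∏ i, ψ (t * r i) = ∑ r ∈ T, ψ (t * ∑ i, r i) := by
          refine Finset.sum_congr rfl fun r _ => ?_
          rw [Finset.mul_sum, hpsum]
    _ = ∑ y : ZMod p, ∑ r ∈ T.filter (fun r => ∑ i, r i = y), ψ (t * ∑ i, r i) :=
          (Finset.sum_fiberwise_of_maps_to (fun r _ => mem_univ _) _).symm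
    _ = ∑ y : ZMod p, (Nc y : ℂ) * ψ (t * y) := by
          refine Finset.sum_congr rfl fun y _ => ?_
          rw [Finset.sum_congr rfl (fun r hr => by rw [(Finset.mem_filter.1 hr).2]),
            Finset.sum_const, nsmul_eq_mul]
  have hS0 : S 0 = (A : ℂ) := by
    rw [hS]
    simp
    rfl
  -- Parseval for S
  have hParS : ∑ t : ZMod p, ‖S t‖ ^ 2 = (p : ℝ) * A := by
    have h := parseval_aux (p := p) (fun y => if y ∈ R then (1 : ℝ) else 0)
    have h1 : ∀ t : ZMod p,
        ∑ y : ZMod p, (((if y ∈ R then (1:ℝ) else 0) : ℝ) : ℂ) * ZMod.stdAddChar (t * y) = S t := by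
      intro t
      rw [hS]
      simp only [apply_ite (fun r : ℝ => (r : ℂ)), Complex.ofReal_one, Complex.ofReal_zero,
        ite_mul, one_mul, zero_mul]
      rw [Finset.sum_ite_mem, Finset.univ_inter]
    have h2 : ∑ y : ZMod p, (if y ∈ R then (1:ℝ) else 0) ^ 2 = (A : ℝ) := by
      simp only [ite_pow, one_pow, ne_eq, OfNat.ofNat_ne_zero, not_false_eq_true, zero_pow]
      rw [Finset.sum_ite_mem, Finset.univ_inter, Finset.sum_const, nsmul_eq_mul, mul_one, hA]
    rw [← h2, ← h]
    exact Finset.sum_congr rfl fun t _ => by rw [h1]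
  -- Parseval for N
  have hParN : (p : ℝ) * ∑ y : ZMod p, (Nc y : ℝ) ^ 2 = ∑ t : ZMod p, ‖S t‖ ^ (2 * l) := by
    have h := parseval_aux (p := p) (fun y => (Nc y : ℝ))
    rw [← h]
    refine (Finset.sum_congr rfl fun t _ => ?_).symm
    have h1 : ∑ y : ZMod p, (((Nc y : ℝ)) : ℂ) * ZMod.stdAddChar (t * y) = S t ^ l := by
      rw [hFour t]
      push_cast
      rfl
    rw [h1, norm_pow, ← pow_mul, mul_comm l 2]
  -- tail sum for S
  have hS0n : ‖S 0‖ ^ 2 = (A : ℝ) ^ 2 := by rw [hS0, Complex.norm_natCast]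
  have hStail : ∑ t ∈ univ.erase (0 : ZMod p), ‖S t‖ ^ 2 = (p : ℝ) * A - (A : ℝ) ^ 2 := by
    have h := Finset.add_sum_erase univ (fun t => ‖S t‖ ^ 2) (mem_univ (0 : ZMod p))
    rw [hParS] at h
    rw [← h, hS0n]
    ring
  -- max bound
  have hmax : ∀ t : ZMod p, t ≠ 0 → ‖S t‖ ^ 2 ≤ (p : ℝ) - A := by
    intro t ht
    have himg : ∑ t' ∈ R.image (fun u => u * t), ‖S t'‖ ^ 2 ≤ ∑ t' ∈ univ.erase 0, ‖S t'‖ ^ 2 := by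
      refine Finset.sum_le_sum_of_subset_of_nonneg ?_ (fun _ _ _ => by positivity)
      intro z hz
      obtain ⟨u, hu, rfl⟩ := Finset.mem_image.1 hz
      refine Finset.mem_erase.2 ⟨?_, mem_univ _⟩
      exact mul_ne_zero (fun h => h0R (h ▸ hu)) ht
    rw [Finset.sum_image (fun a _ b _ h => mul_right_cancel₀ ht h)] at himg
    have heq : ∑ u ∈ R, ‖S (u * t)‖ ^ 2 = (A : ℝ) * ‖S t‖ ^ 2 := by
      rw [Finset.sum_congr rfl fun u hu => by rw [hSmul u hu t], Finset.sum_const, nsmul_eq_mul,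
        hA]
    rw [heq, hStail] at himg
    have hA0 : (0 : ℝ) < A := by exact_mod_cast hA1
    nlinarith [himg]
  -- sum of 2l-th powers
  have hPA0 : (0:ℝ) ≤ (p:ℝ) - A := by
    have : (A:ℝ) ≤ p := by exact_mod_cast hAp
    linarith
  have hsum2l : ∑ t : ZMod p, ‖S t‖ ^ (2 * l) ≤ (A:ℝ)^(2*l) + (A:ℝ) * ((p:ℝ) - A)^l := by
    have h := Finset.add_sum_erase univ (fun t => ‖S t‖ ^ (2*l)) (mem_univ (0 : ZMod p))
    rw [← h]
    have h0 : ‖S 0‖ ^ (2*l) = (A:ℝ)^(2*l) := by rw [hS0, Complex.norm_natCast]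
    have htail : ∑ t ∈ univ.erase (0:ZMod p), ‖S t‖^(2*l)
        ≤ ((p:ℝ)-A)^(l-1) * ∑ t ∈ univ.erase (0:ZMod p), ‖S t‖^2 := by
      rw [Finset.mul_sum]
      refine Finset.sum_le_sum fun t ht => ?_
      have ht0 : t ≠ 0 := (Finset.mem_erase.1 ht).1
      have hb := hmax t ht0
      have hrw : ‖S t‖ ^ (2*l) = (‖S t‖^2)^(l-1) * ‖S t‖^2 := by
        rw [← pow_succ, ← pow_mul]
        congr 1
        omega
      rw [hrw]
      exact mul_le_mul_of_nonneg_right (pow_le_pow_left₀ (by positivity) hb _) (by positivity)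
    rw [hStail] at htail
    have halg : ((p:ℝ)-A)^(l-1) * ((p:ℝ) * A - (A:ℝ)^2) = (A:ℝ) * ((p:ℝ) - A)^l := by
      have : ((p:ℝ) * A - (A:ℝ)^2) = (A:ℝ) * ((p:ℝ) - A) := by ring
      rw [this, ← mul_assoc, mul_comm (((p:ℝ)-A)^(l-1)) (A:ℝ), mul_assoc, ← pow_succ]
      congr 2
      omega
    rw [halg] at htail
    linarith [htail, h0.le, h0.ge]
  -- the coset where N vanishes
  set C : Finset (ZMod p) := R.image (fun u => u * x) with hC
  have hCcard : C.card = A := by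
    rw [hC, Finset.card_image_of_injective _ (fun a b h => mul_right_cancel₀ hx h)]
  have hCN : ∀ y ∈ C, Nc y = 0 := by
    intro y hy
    obtain ⟨u, hu, rfl⟩ := Finset.mem_image.1 hy
    exact hNker u hu
  have hsplit : ∑ y ∈ univ \ C, (Nc y : ℝ) = (A:ℝ)^l := by
    have h1 := Finset.sum_sdiff (f := fun y => (Nc y : ℝ)) (Finset.subset_univ C)
    have hCzero : ∑ y ∈ C, (Nc y:ℝ) = 0 :=
      Finset.sum_eq_zero fun y hy => by rw [hCN y hy]; simp
    have h2 : ∑ y : ZMod p, (Nc y : ℝ) = (A:ℝ)^l := by exact_mod_cast congrArg Nat.cast hNsum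
    rw [hCzero, add_zero] at h1
    rw [h1, h2]
  have hsdcard : ((univ \ C).card : ℝ) = (p:ℝ) - A := by
    rw [Finset.card_sdiff_of_subset (Finset.subset_univ C), Finset.card_univ, ZMod.card, hCcard]
    exact Nat.cast_sub hAp
  have hCS : ((A:ℝ)^l)^2 ≤ ((p:ℝ) - A) * ∑ y : ZMod p, (Nc y : ℝ)^2 := by
    have h1 := sq_sum_le_card_mul_sum_sq (s := univ \ C) (f := fun y => (Nc y:ℝ))
    rw [hsplit, hsdcard] at h1
    refine h1.trans (mul_le_mul_of_nonneg_left ?_ hPA0)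
    exact Finset.sum_le_sum_of_subset_of_nonneg (Finset.sdiff_subset)
      (fun _ _ _ => by positivity)
  -- combine
  have hchain : (p:ℝ) * ((A:ℝ)^l)^2 ≤ ((p:ℝ) - A) * ((A:ℝ)^(2*l) + (A:ℝ) * ((p:ℝ) - A)^l) := by
    have hp0 : (0:ℝ) ≤ p := Nat.cast_nonneg p
    calc (p:ℝ) * ((A:ℝ)^l)^2 ≤ (p:ℝ) * (((p:ℝ) - A) * ∑ y : ZMod p, (Nc y : ℝ)^2) :=
          mul_le_mul_of_nonneg_left hCS hp0
    _ = ((p:ℝ) - A) * ((p:ℝ) * ∑ y : ZMod p, (Nc y : ℝ)^2) := by ring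
    _ = ((p:ℝ) - A) * ∑ t : ZMod p, ‖S t‖ ^ (2*l) := by rw [hParN]
    _ ≤ _ := mul_le_mul_of_nonneg_left hsum2l hPA0
  have hA0 : (0:ℝ) < A := by exact_mod_cast hA1
  have hkey : (A:ℝ)^(2*l) ≤ ((p:ℝ) - A)^(l+1) := by
    have hexp : ((A:ℝ)^l)^2 = (A:ℝ)^(2*l) := by rw [← pow_mul, mul_comm]
    rw [hexp] at hchain
    have h2 : ((p:ℝ) - A) * ((A:ℝ)^(2*l) + (A:ℝ) * ((p:ℝ) - A)^l)
        = ((p:ℝ) - A) * (A:ℝ)^(2*l) + (A:ℝ) * ((p:ℝ) - A)^(l+1) := by ring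
    rw [h2] at hchain
    have h3 : (A:ℝ) * (A:ℝ)^(2*l) ≤ (A:ℝ) * ((p:ℝ) - A)^(l+1) := by nlinarith [hchain]
    exact le_of_mul_le_mul_left h3 hA0
  have hmono : ((p:ℝ) - A)^(l+1) ≤ (p:ℝ)^(l+1) :=
    pow_le_pow_left₀ hPA0 (by linarith [hA0]) _
  -- lower bound from hcard
  have hp0 : (0:ℝ) ≤ p := Nat.cast_nonneg p
  have hbig : (p:ℝ)^(l+1) < (A:ℝ)^(2*l) := by
    have he : ((p:ℝ) ^ (((l : ℝ) + 1) / (2 * (l : ℝ))))^(2*l) = (p:ℝ)^(l+1) := by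
      rw [← Real.rpow_natCast ((p:ℝ) ^ (((l : ℝ) + 1) / (2 * (l : ℝ)))) (2*l),
        ← Real.rpow_mul hp0]
      
      have : ((l : ℝ) + 1) / (2 * (l : ℝ)) * ((2*l : ℕ) : ℝ) = ((l:ℕ) + 1 : ℕ) := by
        have hl0 : (l:ℝ) ≠ 0 := by
          have h2l : (2:ℝ) ≤ (l:ℝ) := by exact_mod_cast hl
          linarith
        push_cast
        field_simp
      rw [this, Real.rpow_natCast]
    calc (p:ℝ)^(l+1) = ((p:ℝ) ^ (((l : ℝ) + 1) / (2 * (l : ℝ))))^(2*l) := he.symm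
    _ < (A:ℝ)^(2*l) := by
        refine pow_lt_pow_left₀ hcard (Real.rpow_nonneg hp0 _) (by omega)
  linarith [hkey, hmono, hbig]

theorem subgroup_basis_property_large (p : ℕ) (hp : p.Prime) (l : ℕ) (hl : 2 ≤ l)
    (R : Finset (ZMod p)) (hR : IsMulSubgroup p R)
    (hcard : (p : ℝ) ^ (((l : ℝ) + 1) / (2 * (l : ℝ))) < (R.card : ℝ)) :
    ∀ x : ZMod p, x ≠ 0 →
      ∃ r : Fin l → ZMod p, (∀ i, r i ∈ R) ∧ ∑ i, r i = x := by
  intro x hx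
  by_contra hcon
  push_neg at hcon
  haveI : Fact p.Prime := ⟨hp⟩
  obtain ⟨H, hH⟩ := hR
  have hmemR : ∀ a : ZMod p, a ∈ R ↔ ∃ v : (ZMod p)ˣ, v ∈ H ∧ (v : ZMod p) = a := by
    intro a
    constructor
    · intro ha
      have h2 : a ∈ (R : Set (ZMod p)) := ha
      rw [hH] at h2
      obtain ⟨v, hv, rfl⟩ := h2
      exact ⟨v, hv, rfl⟩
    · rintro ⟨v, hv, rfl⟩
      have h2 : (v : ZMod p) ∈ (R : Set (ZMod p)) := by rw [hH]; exact ⟨v, hv, rfl⟩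
      exact h2
  have hone : (1 : ZMod p) ∈ R := (hmemR 1).2 ⟨1, H.one_mem, rfl⟩
  have hmul : ∀ a ∈ R, ∀ b ∈ R, a * b ∈ R := by
    intro a ha b hb
    obtain ⟨u, hu, rfl⟩ := (hmemR a).1 ha
    obtain ⟨v, hv, rfl⟩ := (hmemR b).1 hb
    exact (hmemR _).2 ⟨u * v, H.mul_mem hu hv, rfl⟩
  have hinv : ∀ a ∈ R, ∃ b ∈ R, a * b = 1 := by
    intro a ha
    obtain ⟨u, hu, rfl⟩ := (hmemR a).1 ha
    exact ⟨(u⁻¹ : (ZMod p)ˣ), (hmemR _).2 ⟨u⁻¹, H.inv_mem hu, rfl⟩, by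
      rw [← Units.val_mul, mul_inv_cancel, Units.val_one]⟩
  have h0R : (0 : ZMod p) ∉ R := by
    intro h0
    obtain ⟨u, _, h⟩ := (hmemR 0).1 h0
    exact u.ne_zero h
  exact main_aux p hp l hl R hone hmul hinv h0R hcard x hx hcon
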